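/- In a stable translation quiver, if Σ is a finite presection contained in a connected component Γ, then Γ has only finitely many τ-orbits. -/

import Mathlib

/- STATEMENT 8: In a stable translation quiver, if Σ is a finite presection contained
   in a connected component Γ, then Γ has only finitely many τ-orbits. -/

namespace Stmt8

theorem finite_presection_finitely_many_orbits
    {V : Type*} (Arrow : V → V → Prop) (τ : Equiv.Perm V)
    -- stable translation quiver: mesh conditions
    (hmesh₁ : ∀ x y, Arrow x y → Arrow (τ y) x)
    (hmesh₂ : ∀ x y, Arrow x y → Arrow y (τ.symm x))
    -- Γ is connected (we take V to be the connected component Γ)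
    (hconn : ∀ x y : V, Relation.ReflTransGen (fun a b => Arrow a b ∨ Arrow b a) x y)
    (S : Set V)
    -- Σ is a nonempty connected full subquiver
    (hne : S.Nonempty)
    (hSconn : ∀ x ∈ S, ∀ y ∈ S, Relation.ReflTransGen
      (fun a b => a ∈ S ∧ b ∈ S ∧ (Arrow a b ∨ Arrow b a)) x y)
    -- Σ is a presection
    (hP1 : ∀ x y, Arrow x y → x ∈ S → y ∈ S ∨ τ y ∈ S)
    (hP2 : ∀ x y, Arrow x y → y ∈ S → x ∈ S ∨ τ.symm x ∈ S)
    -- Σ is finite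
    (hfin : S.Finite) :
    -- Γ has only finitely many τ-orbits
    ∃ F : Set V, F.Finite ∧ ∀ y : V, ∃ x ∈ F, ∃ n : ℤ, (τ ^ n) x = y := by
  -- Arrow is τ-equivariant
  have equiv₁ : ∀ a b, Arrow a b → Arrow (τ a) (τ b) := fun a b h =>
    hmesh₁ _ _ (hmesh₁ _ _ h)
  have equiv₂ : ∀ a b, Arrow a b → Arrow (τ.symm a) (τ.symm b) := fun a b h =>
    hmesh₂ _ _ (hmesh₂ _ _ h)
  have equivz : ∀ (n : ℤ) a b, Arrow a b → Arrow ((τ ^ n) a) ((τ ^ n) b) := by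
    intro n
    induction n using Int.induction_on with
    | zero => simpa using fun a b h => h
    | succ k ih =>
        intro a b h
        have : ((τ ^ ((k : ℤ) + 1)) : Equiv.Perm V) = τ * τ ^ (k : ℤ) := by
          group
        rw [this]
        simpa [Equiv.Perm.mul_apply] using equiv₁ _ _ (ih a b h)
    | pred k ih =>
        intro a b h
        have : ((τ ^ (-(k : ℤ) - 1)) : Equiv.Perm V) = τ⁻¹ * τ ^ (-(k : ℤ)) := by
          group
        rw [this]
        have := equiv₂ _ _ (ih a b h)
        simpa [Equiv.Perm.mul_apply, Equiv.Perm.inv_def] using this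
  refine ⟨S, hfin, ?_⟩
  obtain ⟨s, hs⟩ := hne
  intro y
  have key : ∀ z : V, Relation.ReflTransGen (fun a b => Arrow a b ∨ Arrow b a) s z →
      ∃ n : ℤ, (τ ^ n) z ∈ S := by
    intro z hz
    induction hz with
    | refl => exact ⟨0, by simpa using hs⟩
    | tail hab e ih =>
        obtain ⟨n, hn⟩ := ih
        rcases e with e | e
        · rcases hP1 _ _ (equivz n _ _ e) hn with h | h
          · exact ⟨n, h⟩
          · refine ⟨n + 1, ?_⟩
            have : ((τ ^ (n + 1)) : Equiv.Perm V) = τ * τ ^ n := by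
              group
            rw [this]; simpa [Equiv.Perm.mul_apply] using h
        · rcases hP2 _ _ (equivz n _ _ e) hn with h | h
          · exact ⟨n, h⟩
          · refine ⟨n - 1, ?_⟩
            have : ((τ ^ (n - 1)) : Equiv.Perm V) = τ⁻¹ * τ ^ n := by
              group
            rw [this]
            simpa [Equiv.Perm.mul_apply, Equiv.Perm.inv_def] using h
  obtain ⟨n, hn⟩ := key y (hconn s y)
  exact ⟨(τ ^ n) y, hn, -n, by simp [← Equiv.Perm.mul_apply, ← zpow_add]⟩

end Stmt8
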